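/- For every t ≥ s+1, y_t = μ_1 + Σ_{τ=2}^{t} ξ_τ + (t−1)·ν_1 + Σ_{τ=2}^{t−1} (t−τ)·ζ_τ + γ_{m_t} + Σ_{j=0}^{⌊(t−1)/s⌋−1} (ω_{t−js} − ω_{t−1−js}) + ε_t, where m_t = t − s·⌊(t−1)/s⌋. -/
import Mathlib

lemma nu_closed (ν ζ : ℕ → ℝ)
    (hν : ∀ t, 1 ≤ t → ν (t + 1) = ν t + ζ (t + 1)) :
    ∀ t, 1 ≤ t → ν t = ν 1 + ∑ τ ∈ Finset.Icc 2 t, ζ τ := by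
  intro t ht
  induction t with
  | zero => omega
  | succ n ih =>
    rcases Nat.eq_or_lt_of_le ht with h | h
    · simp [← h]
    · have hn : 1 ≤ n := by omega
      rw [hν n hn, ih hn, Finset.sum_Icc_succ_top (by omega : 2 ≤ n + 1)]
      ring

lemma mu_closed (μ ν ξ ζ : ℕ → ℝ)
    (hμ : ∀ t, 1 ≤ t → μ (t + 1) = μ t + ν t + ξ (t + 1))
    (hν : ∀ t, 1 ≤ t → ν (t + 1) = ν t + ζ (t + 1)) :
    ∀ t, 1 ≤ t → μ t = μ 1 + (∑ τ ∈ Finset.Icc 2 t, ξ τ) + ((t : ℝ) - 1) * ν 1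
        + ∑ τ ∈ Finset.Icc 2 (t - 1), ((t : ℝ) - (τ : ℝ)) * ζ τ := by
  intro t ht
  induction t with
  | zero => omega
  | succ n ih =>
    rcases Nat.eq_or_lt_of_le ht with h | h
    · simp [← h]
    · have hn : 1 ≤ n := by omega
      rw [hμ n hn, ih hn, nu_closed ν ζ hν n hn]
      rw [Finset.sum_Icc_succ_top (by omega : 2 ≤ n + 1)]
      have hsimp : (n + 1 - 1) = n := by omega
      rw [hsimp]
      -- key sum identity: ∑_{2}^{n} (n+1-τ) ζ τ = ∑_{2}^{n-1} (n-τ) ζ τ + ∑_{2}^{n} ζ τ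
      have key : ∑ τ ∈ Finset.Icc 2 n, (((n:ℝ) + 1) - (τ:ℝ)) * ζ τ
          = (∑ τ ∈ Finset.Icc 2 (n - 1), ((n:ℝ) - (τ:ℝ)) * ζ τ)
            + ∑ τ ∈ Finset.Icc 2 n, ζ τ := by
        rcases Nat.lt_or_ge n 2 with h2 | h2
        · have : n = 1 := by omega
          subst this
          simp
        · obtain ⟨m, rfl⟩ : ∃ m, n = m + 1 := ⟨n - 1, by omega⟩
          rw [Finset.sum_Icc_succ_top (by omega : 2 ≤ m + 1),
              Finset.sum_Icc_succ_top (by omega : 2 ≤ m + 1)]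
          have hm : (m + 1 - 1) = m := by omega
          rw [hm]
          have hsplit : ∑ k ∈ Finset.Icc 2 m, (((m:ℝ) + 1 + 1) - (k:ℝ)) * ζ k
              = (∑ k ∈ Finset.Icc 2 m, (((m:ℝ) + 1) - (k:ℝ)) * ζ k)
                + ∑ k ∈ Finset.Icc 2 m, ζ k := by
            rw [← Finset.sum_add_distrib]
            apply Finset.sum_congr rfl
            intro k _
            ring
          push_cast
          rw [hsplit]
          ring
      push_cast
      push_cast at key
      rw [key]
      ring

lemma gamma_closed (s : ℕ) (hs : 2 ≤ s) (γ ω : ℕ → ℝ)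
    (hω : ∀ t, s ≤ t → ω t = ∑ j ∈ Finset.range s, γ (t - j)) :
    ∀ t, 1 ≤ t →
      γ t = γ (t - s * ((t - 1) / s))
        + ∑ j ∈ Finset.range ((t - 1) / s), (ω (t - j * s) - ω (t - 1 - j * s)) := by
  intro t
  induction t using Nat.strong_induction_on with
  | _ t ih =>
    intro ht
    rcases Nat.lt_or_ge t (s + 1) with hlt | hge
    · have h0 : (t - 1) / s = 0 := Nat.div_eq_of_lt (by omega)
      simp [h0]
    · -- t ≥ s + 1
      have hdiv : (t - 1) / s = (t - 1 - s) / s + 1 :=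
        Nat.div_eq_sub_div (by omega) (by omega)
      -- ω t - ω (t-1) = γ t - γ (t - s)
      have hstep : ω t - ω (t - 1) = γ t - γ (t - s) := by
        rw [hω t (by omega), hω (t - 1) (by omega)]
        obtain ⟨p, rfl⟩ : ∃ p, s = p + 1 := ⟨s - 1, by omega⟩
        rw [Finset.sum_range_succ', Finset.sum_range_succ]
        have h1 : ∀ j ∈ Finset.range p, γ (t - (j + 1)) = γ (t - 1 - j) := by
          intro j _; congr 1; omega
        rw [Finset.sum_congr rfl h1]
        have h2 : t - 1 - p = t - (p + 1) := by omega
        rw [h2]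
        simp only [Nat.sub_zero]
        ring
      have hts : 1 ≤ t - s := by omega
      have hIH := ih (t - s) (by omega) hts
      rw [hdiv, Finset.sum_range_succ']
      have hsum : ∀ j ∈ Finset.range ((t - 1 - s) / s),
          ω (t - (j + 1) * s) - ω (t - 1 - (j + 1) * s)
          = ω (t - s - j * s) - ω (t - s - 1 - j * s) := by
        intro j _
        have h1 : (j + 1) * s = j * s + s := by ring
        have h2 : t - (j + 1) * s = t - s - j * s := by omega
        have h3 : t - 1 - (j + 1) * s = t - s - 1 - j * s := by omega
        rw [h2, h3]
      rw [Finset.sum_congr rfl hsum]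
      have hm : t - s * ((t - 1 - s) / s + 1) = t - s - s * ((t - s - 1) / s) := by
        have h1 : s * ((t - 1 - s) / s + 1) = s * ((t - 1 - s) / s) + s := by ring
        have h2 : t - 1 - s = t - s - 1 := by omega
        rw [h1, h2]
        omega
      rw [hm]
      have h2 : t - 1 - s = t - s - 1 := by omega
      rw [h2]
      simp only [Nat.zero_mul, Nat.sub_zero]
      linarith [hIH, hstep]

/-- Basic structural model, regression form for `t ≥ s+1`:
`y t = μ 1 + ∑_{τ=2}^{t} ξ τ + (t−1)·ν 1 + ∑_{τ=2}^{t−1} (t−τ)·ζ τ + γ (m t)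
      + ∑_{j=0}^{⌊(t−1)/s⌋−1} (ω (t−js) − ω (t−1−js)) + ε t`,
where `m t = t − s·⌊(t−1)/s⌋`. -/
theorem bsm_regression_late
    (s : ℕ) (hs : 2 ≤ s)
    (y μ ν γ ε ξ ζ ω : ℕ → ℝ)
    (hy : ∀ t, 1 ≤ t → y t = μ t + γ t + ε t)
    (hμ : ∀ t, 1 ≤ t → μ (t + 1) = μ t + ν t + ξ (t + 1))
    (hν : ∀ t, 1 ≤ t → ν (t + 1) = ν t + ζ (t + 1))
    (hω : ∀ t, s ≤ t → ω t = ∑ j ∈ Finset.range s, γ (t - j)) :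
    ∀ t, s + 1 ≤ t →
      y t = μ 1 + (∑ τ ∈ Finset.Icc 2 t, ξ τ) + ((t : ℝ) - 1) * ν 1
        + (∑ τ ∈ Finset.Icc 2 (t - 1), ((t : ℝ) - (τ : ℝ)) * ζ τ)
        + γ (t - s * ((t - 1) / s))
        + (∑ j ∈ Finset.range ((t - 1) / s), (ω (t - j * s) - ω (t - 1 - j * s)))
        + ε t := by
  intro t ht
  rw [hy t (by omega), mu_closed μ ν ξ ζ hμ hν t (by omega),
      gamma_closed s hs γ ω hω t (by omega)]
  ring
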